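/- arXiv:2312.08322 — 2 statements merged into one kernel-verified Lean document; each statement's English description precedes it below -/
import Mathlib

section
/- For μ = 0 (independent errors) and all p ∈ (0, 1/2), the [[6,1]] DQ code has strictly smaller failure probability than the [[6,1]] QD code: 2r(1−r) < 3q²(1−q)+q³, where r = 3p²−2p³ and q = 2p(1−p). -/
/-- For independent errors (μ = 0) and all p ∈ (0, 1/2), the [[6,1]] DQ code has strictly
smaller failure probability than the [[6,1]] QD code: 2r(1−r) < 3q²(1−q)+q³, where
r = 3p²−2p³ and q = 2p(1−p). -/
theorem stmt_10 (p : ℝ) (h0 : 0 < p) (h1 : p < 1 / 2) :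
    2 * (3 * p ^ 2 - 2 * p ^ 3) * (1 - (3 * p ^ 2 - 2 * p ^ 3))
      < 3 * (2 * p * (1 - p)) ^ 2 * (1 - 2 * p * (1 - p)) + (2 * p * (1 - p)) ^ 3 := by
  have hp1 : 0 < 1 - p := by linarith
  have hp2 : 0 < 1 - 2 * p := by linarith
  have key : 0 < p * (1 - 2 * p) * (1 - p) := by positivity
  nlinarith [mul_pos key key]
end

section
/- The [[6,1]] DQ code corrects the 32 errors listed in its degeneracy equivalence class: for any two errors E, E' in the same set of the class (e.g., {XIIIII, IXXXXX}), E|w⟩ = E'|w⟩ up to a global phase for both codewords w, and for errors E, F drawn from different sets, ⟨0_L|E†F|1_L⟩ = 0 and ⟨0_L|E†F|0_L⟩ = ⟨1_L|E†F|1_L⟩ (Knill–Laflamme conditions). -/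
open Matrix Kronecker

noncomputable def PX : Matrix (Fin 2) (Fin 2) ℂ := !![0, 1; 1, 0]

abbrev T6 := Fin 2 × Fin 2 × Fin 2 × Fin 2 × Fin 2 × Fin 2

noncomputable def t6 (A B C D E F : Matrix (Fin 2) (Fin 2) ℂ) : Matrix T6 T6 ℂ :=
  A ⊗ₖ (B ⊗ₖ (C ⊗ₖ (D ⊗ₖ (E ⊗ₖ F))))

noncomputable def g (b : Bool) : Matrix (Fin 2) (Fin 2) ℂ := if b then PX else 1

/-- Bit-flip error with pattern f. -/
noncomputable def P (f : Fin 6 → Bool) : Matrix T6 T6 ℂ :=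
  t6 (g (f 0)) (g (f 1)) (g (f 2)) (g (f 3)) (g (f 4)) (g (f 5))

/-- Membership in the correctable set {III,XII,IXI,IIX}^{⊗2}: at most one flip in each
three-qubit block. -/
def ok (f : Fin 6 → Bool) : Prop :=
  ((if f 0 then 1 else 0) + (if f 1 then 1 else 0) + (if f 2 then (1 : ℕ) else 0) ≤ 1) ∧
  ((if f 3 then 1 else 0) + (if f 4 then 1 else 0) + (if f 5 then (1 : ℕ) else 0) ≤ 1)

def kk (a b c d e f : Fin 2) : T6 → ℂ := fun p => if p = (a, b, c, d, e, f) then 1 else 0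

/-- Normalized [[6,1]] DQ codewords. -/
noncomputable def w0 : T6 → ℂ := ((Real.sqrt 2 : ℂ))⁻¹ • (kk 0 0 0 0 0 0 + kk 1 1 1 1 1 1)
noncomputable def w1 : T6 → ℂ := ((Real.sqrt 2 : ℂ))⁻¹ • (kk 0 0 0 1 1 1 + kk 1 1 1 0 0 0)

def xa (b : Bool) (x : Fin 2) : Fin 2 := if b then x + 1 else x
def K (q : T6) : T6 → ℂ := fun p => if p = q then 1 else 0
def Phi (f : Fin 6 → Bool) (q : T6) : T6 :=
  (xa (f 0) q.1, xa (f 1) q.2.1, xa (f 2) q.2.2.1, xa (f 3) q.2.2.2.1,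
   xa (f 4) q.2.2.2.2.1, xa (f 5) q.2.2.2.2.2)

lemma g_apply (b : Bool) (x y : Fin 2) : g b x y = if x = xa b y then 1 else 0 := by
  cases b
  · simp [g, xa, Matrix.one_apply]
  · fin_cases x <;> fin_cases y <;> simp [g, PX, xa]

lemma P_apply (f : Fin 6 → Bool) (p q : T6) :
    P f p q = if p = Phi f q then 1 else 0 := by
  obtain ⟨p1,p2,p3,p4,p5,p6⟩ := p
  obtain ⟨q1,q2,q3,q4,q5,q6⟩ := q
  simp only [P, t6, Matrix.kroneckerMap_apply, g_apply, Phi, Prod.mk.injEq]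
  split_ifs <;> simp_all

lemma xa_invol : ∀ (b : Bool) (x : Fin 2), xa b (xa b x) = x := by decide

lemma Phi_invol (f : Fin 6 → Bool) (q : T6) : Phi f (Phi f q) = q := by
  obtain ⟨q1,q2,q3,q4,q5,q6⟩ := q
  simp [Phi, xa_invol]

lemma P_mulVec_K (f : Fin 6 → Bool) (q : T6) : (P f).mulVec (K q) = K (Phi f q) := by
  funext p
  simp [mulVec, dotProduct, K, P_apply]

lemma K_dot (p q : T6) : star (K p) ⬝ᵥ K q = if q = p then 1 else 0 := by
  simp [dotProduct, K, apply_ite (star : ℂ → ℂ)]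

lemma P_herm (f : Fin 6 → Bool) : (P f)ᴴ = P f := by
  ext p q
  simp only [conjTranspose_apply, P_apply, apply_ite (star : ℂ → ℂ), star_one, star_zero]
  congr 1
  simp only [eq_iff_iff]
  constructor
  · intro h; rw [h, Phi_invol]
  · intro h; rw [h, Phi_invol]

lemma w0_eq : w0 = ((Real.sqrt 2 : ℂ))⁻¹ • (K (0,0,0,0,0,0) + K (1,1,1,1,1,1)) := rfl
lemma w1_eq : w1 = ((Real.sqrt 2 : ℂ))⁻¹ • (K (0,0,0,1,1,1) + K (1,1,1,0,0,0)) := rfl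

lemma Pw0 (f : Fin 6 → Bool) : (P f).mulVec w0 =
    ((Real.sqrt 2 : ℂ))⁻¹ • (K (Phi f (0,0,0,0,0,0)) + K (Phi f (1,1,1,1,1,1))) := by
  rw [w0_eq, Matrix.mulVec_smul, Matrix.mulVec_add, P_mulVec_K, P_mulVec_K]

lemma Pw1 (f : Fin 6 → Bool) : (P f).mulVec w1 =
    ((Real.sqrt 2 : ℂ))⁻¹ • (K (Phi f (0,0,0,1,1,1)) + K (Phi f (1,1,1,0,0,0))) := by
  rw [w1_eq, Matrix.mulVec_smul, Matrix.mulVec_add, P_mulVec_K, P_mulVec_K]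

lemma xa_not0 : ∀ b : Bool, xa (!b) 0 = xa b 1 := by decide
lemma xa_not1 : ∀ b : Bool, xa (!b) 1 = xa b 0 := by decide

lemma Phi_not_0 (f : Fin 6 → Bool) :
    Phi (fun i => !(f i)) (0,0,0,0,0,0) = Phi f (1,1,1,1,1,1) := by
  simp [Phi, xa_not0]
lemma Phi_not_1 (f : Fin 6 → Bool) :
    Phi (fun i => !(f i)) (1,1,1,1,1,1) = Phi f (0,0,0,0,0,0) := by
  simp [Phi, xa_not1]
lemma Phi_not_2 (f : Fin 6 → Bool) :
    Phi (fun i => !(f i)) (0,0,0,1,1,1) = Phi f (1,1,1,0,0,0) := by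
  simp [Phi, xa_not0, xa_not1]
lemma Phi_not_3 (f : Fin 6 → Bool) :
    Phi (fun i => !(f i)) (1,1,1,0,0,0) = Phi f (0,0,0,1,1,1) := by
  simp [Phi, xa_not0, xa_not1]



lemma A00 : ∀ b c : Bool, xa b (xa c (0:Fin 2)) = 0 ↔ b = c := by decide
lemma A01 : ∀ b c : Bool, xa b (xa c (0:Fin 2)) = 1 ↔ b = !c := by decide
lemma A11 : ∀ b c : Bool, xa b (xa c (1:Fin 2)) = 1 ↔ b = c := by decide
lemma A10 : ∀ b c : Bool, xa b (xa c (1:Fin 2)) = 0 ↔ b = !c := by decide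

lemma bool_swap : ∀ a b : Bool, a = !b → b = !a := by decide

lemma block1 (f h : Fin 6 → Bool) (hf : ok f) (hh : ok h) :
    ¬(f 0 = !h 0 ∧ f 1 = !h 1 ∧ f 2 = !h 2) := by
  rintro ⟨a, b, c⟩
  have h1 := hf.1; have h2 := hh.1
  rw [a, b, c] at h1
  cases e0 : h 0 <;> cases e1 : h 1 <;> cases e2 : h 2 <;> simp_all

lemma block2 (f h : Fin 6 → Bool) (hf : ok f) (hh : ok h) :
    ¬(f 3 = !h 3 ∧ f 4 = !h 4 ∧ f 5 = !h 5) := by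
  rintro ⟨a, b, c⟩
  have h1 := hf.2; have h2 := hh.2
  rw [a, b, c] at h1
  cases e0 : h 3 <;> cases e1 : h 4 <;> cases e2 : h 5 <;> simp_all

lemma alleq (f h : Fin 6 → Bool) (hne : h ≠ f) :
    ¬(f 0 = h 0 ∧ f 1 = h 1 ∧ f 2 = h 2 ∧ f 3 = h 3 ∧ f 4 = h 4 ∧ f 5 = h 5) := by
  rintro ⟨a, b, c, d, e, j⟩
  exact hne (by funext i; fin_cases i <;> simp_all)

lemma allne (f h : Fin 6 → Bool) (hne2 : h ≠ fun i => !(f i)) :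
    ¬(f 0 = !h 0 ∧ f 1 = !h 1 ∧ f 2 = !h 2 ∧ f 3 = !h 3 ∧ f 4 = !h 4 ∧ f 5 = !h 5) := by
  rintro ⟨a, b, c, d, e, j⟩
  apply hne2
  funext i
  fin_cases i
  · exact bool_swap _ _ a
  · exact bool_swap _ _ b
  · exact bool_swap _ _ c
  · exact bool_swap _ _ d
  · exact bool_swap _ _ e
  · exact bool_swap _ _ j

/-- Degeneracy within each pair {E, X^{⊗6}E} of the equivalence class (equal action on both
codewords up to a global phase), and the Knill–Laflamme conditions across distinct pairs. -/
theorem stmt_17 :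
    (∀ f : Fin 6 → Bool, ok f →
      ∃ c : ℂ, ‖c‖ = 1 ∧
        (P f).mulVec w0 = c • (P (fun i => !(f i))).mulVec w0 ∧
        (P f).mulVec w1 = c • (P (fun i => !(f i))).mulVec w1) ∧
    (∀ f h : Fin 6 → Bool, ok f → ok h → h ≠ f → h ≠ (fun i => !(f i)) →
      star w0 ⬝ᵥ ((P f)ᴴ * P h).mulVec w1 = 0 ∧
      star w0 ⬝ᵥ ((P f)ᴴ * P h).mulVec w0 = star w1 ⬝ᵥ ((P f)ᴴ * P h).mulVec w1) := by
  constructor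
  · intro f _
    refine ⟨1, by simp, ?_, ?_⟩
    · rw [Pw0, Pw0, one_smul, Phi_not_0, Phi_not_1, add_comm]
    · rw [Pw1, Pw1, one_smul, Phi_not_2, Phi_not_3, add_comm]
  · intro f h hf hh hne hne2
    have n1 : ¬(f 0 = h 0 ∧ f 1 = h 1 ∧ f 2 = h 2 ∧ f 3 = !h 3 ∧ f 4 = !h 4 ∧ f 5 = !h 5) :=
      fun ⟨_, _, _, a, b, c⟩ => block2 f h hf hh ⟨a, b, c⟩
    have n2 : ¬(f 0 = !h 0 ∧ f 1 = !h 1 ∧ f 2 = !h 2 ∧ f 3 = h 3 ∧ f 4 = h 4 ∧ f 5 = h 5) :=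
      fun ⟨a, b, c, _, _, _⟩ => block1 f h hf hh ⟨a, b, c⟩
    have n3 := alleq f h hne
    have n4 := allne f h hne2
    constructor
    · rw [P_herm, ← Matrix.mulVec_mulVec, Pw1, Matrix.mulVec_smul, Matrix.mulVec_add,
        P_mulVec_K, P_mulVec_K, w0_eq]
      simp only [star_smul, star_add, smul_dotProduct, dotProduct_smul, add_dotProduct,
        dotProduct_add, K_dot]
      simp only [Phi, Prod.mk.injEq, A00, A01, A11, A10]
      simp [n1, n2]
    · rw [P_herm, ← Matrix.mulVec_mulVec, ← Matrix.mulVec_mulVec, Pw0, Pw1]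
      simp only [Matrix.mulVec_smul, Matrix.mulVec_add, P_mulVec_K, w0_eq, w1_eq]
      simp only [star_smul, star_add, smul_dotProduct, dotProduct_smul, add_dotProduct,
        dotProduct_add, K_dot]
      simp only [Phi, Prod.mk.injEq, A00, A01, A11, A10]
end
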